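/- Let n be squarefree and let G(d,e,k) and G(d',e',k') be two groups as above with de = d'e' = n. Then G(d,e,k) ≅ G(d',e',k') if and only if d = d', e = e', and k and k' generate the same cyclic subgroup of (ℤ/eℤ)ˣ. -/

import Mathlib

/-- The relators for the group `G(d,e,k) = ⟨σ, τ | σ^e = τ^d = 1, τστ⁻¹ = σ^k⟩`. -/
def braceRels (d e k : ℕ) : Set (FreeGroup (Fin 2)) :=
  {FreeGroup.of 0 ^ e, FreeGroup.of 1 ^ d,
    FreeGroup.of 1 * FreeGroup.of 0 * (FreeGroup.of 1)⁻¹ * (FreeGroup.of 0 ^ k)⁻¹}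

/-- The group `G(d,e,k)` presented by generators σ (index 0) and τ (index 1). -/
abbrev GGrp (d e k : ℕ) := PresentedGroup (braceRels d e k)

namespace GGrpAux

/-- σ generator -/
def sg (d e k : ℕ) : GGrp d e k := PresentedGroup.of 0
/-- τ generator -/
def tg (d e k : ℕ) : GGrp d e k := PresentedGroup.of 1

variable {d e k : ℕ}

lemma rel_one {r : FreeGroup (Fin 2)} (h : r ∈ braceRels d e k) :
    PresentedGroup.mk (braceRels d e k) r = 1 :=
  (QuotientGroup.eq_one_iff r).mpr (Subgroup.subset_normalClosure h)

lemma sg_pow_e : sg d e k ^ e = 1 := by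
  have := rel_one (d := d) (e := e) (k := k) (Or.inl rfl)
  rw [map_pow] at this; exact this

lemma tg_pow_d : tg d e k ^ d = 1 := by
  have := rel_one (d := d) (e := e) (k := k) (Or.inr (Or.inl rfl))
  rw [map_pow] at this; exact this

lemma conj_rel : tg d e k * sg d e k * (tg d e k)⁻¹ = sg d e k ^ k := by
  have := rel_one (d := d) (e := e) (k := k) (Or.inr (Or.inr rfl))
  rw [map_mul, map_mul, map_mul, map_inv, map_inv, map_pow] at this
  have h := mul_eq_one_iff_eq_inv.mp this
  rw [inv_inv] at h
  exact h

/-- τ^m σ^j τ^{-m} = σ^(k^m * j) -/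
lemma conj_pow_pow (m j : ℕ) :
    tg d e k ^ m * sg d e k ^ j * (tg d e k ^ m)⁻¹ = sg d e k ^ (k ^ m * j) := by
  induction m generalizing j with
  | zero => simp
  | succ m ih =>
    have h1 : tg d e k * sg d e k ^ j * (tg d e k)⁻¹ = sg d e k ^ (k * j) := by
      calc tg d e k * sg d e k ^ j * (tg d e k)⁻¹
          = (tg d e k * sg d e k * (tg d e k)⁻¹) ^ j := (conj_pow).symm
        _ = (sg d e k ^ k) ^ j := by rw [conj_rel]
        _ = sg d e k ^ (k * j) := by rw [← pow_mul]
    calc tg d e k ^ (m + 1) * sg d e k ^ j * (tg d e k ^ (m + 1))⁻¹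
        = tg d e k ^ m * (tg d e k * sg d e k ^ j * (tg d e k)⁻¹) * (tg d e k ^ m)⁻¹ := by
          rw [pow_succ]; group
      _ = tg d e k ^ m * sg d e k ^ (k * j) * (tg d e k ^ m)⁻¹ := by rw [h1]
      _ = sg d e k ^ (k ^ m * (k * j)) := ih (k * j)
      _ = sg d e k ^ (k ^ (m + 1) * j) := by ring_nf

lemma tau_pow_mul_sigma_pow (m j : ℕ) :
    tg d e k ^ m * sg d e k ^ j = sg d e k ^ (k ^ m * j) * tg d e k ^ m := by
  have := conj_pow_pow (d := d) (e := e) (k := k) m j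
  rw [mul_inv_eq_iff_eq_mul] at this
  exact this

end GGrpAux

namespace GGrpAux

lemma exists_pow_modEq {e k k' : ℕ}
    (h : (k : ZMod e) ∈ Submonoid.powers ((k' : ZMod e))) :
    ∃ m, k' ^ m ≡ k [MOD e] := by
  obtain ⟨m, hm⟩ := h
  exact ⟨m, (ZMod.natCast_eq_natCast_iff _ _ _).mp (by push_cast; exact hm)⟩

/-- The homomorphism `G(d,e,k) →* G(d,e,k')` determined by `σ ↦ σ`, `τ ↦ τ^m`,
where `k'^m ≡ k [MOD e]`. -/
def ggHom (d e k k' m : ℕ) (hm : k' ^ m ≡ k [MOD e]) : GGrp d e k →* GGrp d e k' :=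
  PresentedGroup.toGroup (f := ![sg d e k', tg d e k' ^ m]) (by
    intro r hr
    rcases hr with rfl | rfl | rfl
    · rw [map_pow, FreeGroup.lift_apply_of]
      simpa using sg_pow_e (d := d) (e := e) (k := k')
    · rw [map_pow, FreeGroup.lift_apply_of]
      simp only [Matrix.cons_val_one, Matrix.head_cons, Matrix.cons_val_zero]
      rw [← pow_mul, mul_comm m d, pow_mul, tg_pow_d, one_pow]
    · simp only [map_mul, map_inv, map_pow, FreeGroup.lift_apply_of, Matrix.cons_val_zero,
        Matrix.cons_val_one, Matrix.head_cons]
      have h1 : tg d e k' ^ m * sg d e k' * (tg d e k' ^ m)⁻¹ = sg d e k' ^ (k' ^ m) := by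
        simpa using conj_pow_pow (d := d) (e := e) (k := k') m 1
      have h2 : sg d e k' ^ (k' ^ m) = sg d e k' ^ k := by
        rw [pow_eq_pow_mod _ (sg_pow_e (d := d)), pow_eq_pow_mod k (sg_pow_e (d := d)), hm]
      rw [mul_assoc (tg d e k' ^ m), ← mul_assoc, h1, h2, mul_inv_cancel])

@[simp] lemma ggHom_sg (d e k k' m : ℕ) (hm : k' ^ m ≡ k [MOD e]) :
    ggHom d e k k' m hm (sg d e k) = sg d e k' := by
  exact PresentedGroup.toGroup.of (f := ![sg d e k', tg d e k' ^ m]) _ (x := 0)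

@[simp] lemma ggHom_tg (d e k k' m : ℕ) (hm : k' ^ m ≡ k [MOD e]) :
    ggHom d e k k' m hm (tg d e k) = tg d e k' ^ m := by
  exact PresentedGroup.toGroup.of (f := ![sg d e k', tg d e k' ^ m]) _ (x := 1)

lemma tg_pow_eq {d e k m : ℕ} (h : m ≡ 1 [MOD d]) : tg d e k ^ m = tg d e k := by
  calc tg d e k ^ m = tg d e k ^ (m % d) := pow_eq_pow_mod _ tg_pow_d
    _ = tg d e k ^ (1 % d) := by rw [h]
    _ = tg d e k ^ 1 := (pow_eq_pow_mod _ tg_pow_d).symm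
    _ = tg d e k := pow_one _

lemma backward {d e k k' : ℕ} (hke : Nat.Coprime k e) (hke' : Nat.Coprime k' e)
    (hord : orderOf (ZMod.unitOfCoprime k hke) = d)
    (hord' : orderOf (ZMod.unitOfCoprime k' hke') = d)
    (hkk' : Submonoid.powers ((k : ZMod e)) = Submonoid.powers ((k' : ZMod e))) :
    Nonempty (GGrp d e k ≃* GGrp d e k') := by
  obtain ⟨m, hm⟩ := exists_pow_modEq (hkk' ▸ Submonoid.mem_powers _)
  obtain ⟨m', hm'⟩ := exists_pow_modEq (k := k') (k' := k)
    (hkk'.symm ▸ Submonoid.mem_powers _)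
  have hmz : ((k : ZMod e)) ^ m' = (k' : ZMod e) := by
    have := (ZMod.natCast_eq_natCast_iff _ _ _).mpr hm'
    push_cast at this; exact this
  have hmz' : ((k' : ZMod e)) ^ m = (k : ZMod e) := by
    have := (ZMod.natCast_eq_natCast_iff _ _ _).mpr hm
    push_cast at this; exact this
  -- m' * m ≡ 1 [MOD d]
  have hmm : m' * m ≡ 1 [MOD d] := by
    have hu : (ZMod.unitOfCoprime k hke) ^ (m' * m) = (ZMod.unitOfCoprime k hke) ^ 1 := by
      ext
      push_cast [ZMod.coe_unitOfCoprime]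
      rw [pow_mul, hmz, hmz', pow_one]
    rw [← hord]
    exact pow_eq_pow_iff_modEq.mp hu
  have hmm' : m * m' ≡ 1 [MOD d] := by rwa [mul_comm] at hmm
  refine ⟨MonoidHom.toMulEquiv (ggHom d e k k' m hm) (ggHom d e k' k m' hm') ?_ ?_⟩
  · apply PresentedGroup.ext
    intro x
    fin_cases x
    · show ggHom d e k' k m' hm' (ggHom d e k k' m hm (sg d e k)) = sg d e k
      simp
    · show ggHom d e k' k m' hm' (ggHom d e k k' m hm (tg d e k)) = tg d e k
      rw [ggHom_tg, map_pow, ggHom_tg, ← pow_mul]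
      exact tg_pow_eq hmm
  · apply PresentedGroup.ext
    intro x
    fin_cases x
    · show ggHom d e k k' m hm (ggHom d e k' k m' hm' (sg d e k')) = sg d e k'
      simp
    · show ggHom d e k k' m hm (ggHom d e k' k m' hm' (tg d e k')) = tg d e k'
      rw [ggHom_tg, map_pow, ggHom_tg, ← pow_mul]
      exact tg_pow_eq hmm'

end GGrpAux

namespace GGrpAux

open Multiplicative SemidirectProduct

section Model

set_option linter.unusedSectionVars false

variable (d e k : ℕ) [NeZero d] [NeZero e]

/-- The homomorphism `ZMod d → (ZMod e)ˣ` sending `1` to the unit `k`. -/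
def phiAux (hke : Nat.Coprime k e) (hud : (ZMod.unitOfCoprime k hke) ^ d = 1) :
    Multiplicative (ZMod d) →* (ZMod e)ˣ :=
  MonoidHom.mk' (fun b => (ZMod.unitOfCoprime k hke) ^ (b.toAdd).val)
    (fun a b => by
      show (ZMod.unitOfCoprime k hke) ^ ((a.toAdd + b.toAdd).val) = _ * _
      rw [ZMod.val_add, ← pow_eq_pow_mod _ hud, pow_add])

/-- Units of `ZMod e` acting as automorphisms of `Multiplicative (ZMod e)`. -/
def unitAut : (ZMod e)ˣ →* MulAut (Multiplicative (ZMod e)) :=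
  MonoidHom.mk' (fun w => AddEquiv.toMultiplicative (DistribMulAction.toAddAut (ZMod e)ˣ (ZMod e) w))
    (fun a b => by ext x; show ofAdd _ = ofAdd _; simp [mul_smul])

def phi (hke : Nat.Coprime k e) (hud : (ZMod.unitOfCoprime k hke) ^ d = 1) :
    Multiplicative (ZMod d) →* MulAut (Multiplicative (ZMod e)) :=
  (unitAut e).comp (phiAux d e k hke hud)

lemma phi_apply (hke : Nat.Coprime k e) (hud : (ZMod.unitOfCoprime k hke) ^ d = 1)
    (b : ZMod d) (a : ZMod e) :
    phi d e k hke hud (ofAdd b) (ofAdd a)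
      = ofAdd ((((ZMod.unitOfCoprime k hke) ^ b.val : (ZMod e)ˣ) : ZMod e) * a) := rfl

/-- The concrete model `ZMod e ⋊ ZMod d`. -/
abbrev HGrp (hke : Nat.Coprime k e) (hud : (ZMod.unitOfCoprime k hke) ^ d = 1) :=
  Multiplicative (ZMod e) ⋊[phi d e k hke hud] Multiplicative (ZMod d)

variable (hke : Nat.Coprime k e) (hud : (ZMod.unitOfCoprime k hke) ^ d = 1)

/-- σ in the model. -/
def sH : HGrp d e k hke hud := inl (ofAdd (1 : ZMod e))
/-- τ in the model. -/
def tH : HGrp d e k hke hud := inr (ofAdd (1 : ZMod d))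

lemma inl_eq_sH_pow (a : ZMod e) :
    (inl (ofAdd a) : HGrp d e k hke hud) = sH d e k hke hud ^ a.val := by
  rw [sH, ← map_pow]
  congr 1
  show _ = ofAdd (a.val • (1 : ZMod e))
  rw [nsmul_eq_mul, mul_one, ZMod.natCast_rightInverse a]

lemma inr_eq_tH_pow (b : ZMod d) :
    (inr (ofAdd b) : HGrp d e k hke hud) = tH d e k hke hud ^ b.val := by
  rw [tH, ← map_pow]
  congr 1
  show _ = ofAdd (b.val • (1 : ZMod d))
  rw [nsmul_eq_mul, mul_one, ZMod.natCast_rightInverse b]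

lemma sH_pow_e : sH d e k hke hud ^ e = 1 := by
  rw [sH, ← map_pow]
  have : (ofAdd (1 : ZMod e)) ^ e = 1 := by
    show ofAdd (e • (1 : ZMod e)) = 1
    rw [nsmul_eq_mul, mul_one, ZMod.natCast_self]; rfl
  rw [this, map_one]

lemma tH_pow_d : tH d e k hke hud ^ d = 1 := by
  rw [tH, ← map_pow]
  have : (ofAdd (1 : ZMod d)) ^ d = 1 := by
    show ofAdd (d • (1 : ZMod d)) = 1
    rw [nsmul_eq_mul, mul_one, ZMod.natCast_self]; rfl
  rw [this, map_one]

lemma sH_pow_nat (m : ℕ) : sH d e k hke hud ^ m = inl (ofAdd ((m : ZMod e))) := by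
  rw [sH, ← map_pow]
  congr 1
  show ofAdd (m • (1 : ZMod e)) = _
  rw [nsmul_eq_mul, mul_one]

lemma conj_rel_H : tH d e k hke hud * sH d e k hke hud * (tH d e k hke hud)⁻¹
    = sH d e k hke hud ^ k := by
  have hinv : ((inr (ofAdd (1 : ZMod d)) : HGrp d e k hke hud))⁻¹ = inr ((ofAdd (1 : ZMod d))⁻¹) :=
    (map_inv _ _).symm
  rw [tH, sH, hinv, ← inl_aut, phi_apply, ← map_pow]
  congr 1
  show ofAdd _ = ofAdd (k • (1 : ZMod e))
  have h1 : (1 : ZMod d).val = 1 % d := by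
    have : ((1 : ℕ) : ZMod d) = (1 : ZMod d) := by push_cast; rfl
    rw [← this, ZMod.val_natCast]
  rw [h1, ← pow_eq_pow_mod _ hud, pow_one, ZMod.coe_unitOfCoprime, mul_one,
    nsmul_eq_mul, mul_one]

/-- The canonical homomorphism from the presented group to the model. -/
def ggToH : GGrp d e k →* HGrp d e k hke hud :=
  PresentedGroup.toGroup (f := ![sH d e k hke hud, tH d e k hke hud]) (by
    intro r hr
    rcases hr with rfl | rfl | rfl
    · rw [map_pow, FreeGroup.lift_apply_of]
      simpa using sH_pow_e d e k hke hud
    · rw [map_pow, FreeGroup.lift_apply_of]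
      simpa using tH_pow_d d e k hke hud
    · simp only [map_mul, map_inv, map_pow, FreeGroup.lift_apply_of, Matrix.cons_val_zero,
        Matrix.cons_val_one, Matrix.head_cons]
      rw [conj_rel_H, mul_inv_cancel])

@[simp] lemma ggToH_sg : ggToH d e k hke hud (sg d e k) = sH d e k hke hud := by
  exact PresentedGroup.toGroup.of (f := ![sH d e k hke hud, tH d e k hke hud]) _ (x := 0)

@[simp] lemma ggToH_tg : ggToH d e k hke hud (tg d e k) = tH d e k hke hud := by
  exact PresentedGroup.toGroup.of (f := ![sH d e k hke hud, tH d e k hke hud]) _ (x := 1)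

lemma ggToH_surjective : Function.Surjective (ggToH d e k hke hud) := by
  intro x
  refine ⟨sg d e k ^ (x.left.toAdd).val * tg d e k ^ (x.right.toAdd).val, ?_⟩
  rw [map_mul, map_pow, map_pow, ggToH_sg, ggToH_tg,
    ← inl_eq_sH_pow, ← inr_eq_tH_pow, ofAdd_toAdd, ofAdd_toAdd,
    inl_left_mul_inr_right]

/-- normalization of powers -/
lemma sg_pow_nat (m : ℕ) : sg d e k ^ m = sg d e k ^ ((m : ZMod e)).val := by
  rw [ZMod.val_natCast]; exact pow_eq_pow_mod _ sg_pow_e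

lemma tg_pow_nat (m : ℕ) : tg d e k ^ m = tg d e k ^ ((m : ZMod d)).val := by
  rw [ZMod.val_natCast]; exact pow_eq_pow_mod _ tg_pow_d

lemma gg_decomp (x : GGrp d e k) : ∃ a b : ℕ, x = sg d e k ^ a * tg d e k ^ b := by
  have hd1 : 1 ≤ d := Nat.one_le_iff_ne_zero.mpr (NeZero.ne d)
  have he1 : 1 ≤ e := Nat.one_le_iff_ne_zero.mpr (NeZero.ne e)
  let T : Subgroup (GGrp d e k) :=
    { carrier := {x | ∃ a b : ℕ, x = sg d e k ^ a * tg d e k ^ b}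
      one_mem' := ⟨0, 0, by simp⟩
      mul_mem' := by
        rintro x y ⟨a, b, rfl⟩ ⟨c, f, rfl⟩
        refine ⟨a + k ^ b * c, b + f, ?_⟩
        rw [mul_assoc, ← mul_assoc (tg d e k ^ b), tau_pow_mul_sigma_pow,
          pow_add, pow_add]
        group
      inv_mem' := by
        rintro x ⟨a, b, rfl⟩
        have htinv : (tg d e k)⁻¹ = tg d e k ^ (d - 1) := by
          rw [eq_comm, eq_inv_iff_mul_eq_one, ← pow_succ, Nat.sub_add_cancel hd1, tg_pow_d]
        have hsinv : (sg d e k)⁻¹ = sg d e k ^ (e - 1) := by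
          rw [eq_comm, eq_inv_iff_mul_eq_one, ← pow_succ, Nat.sub_add_cancel he1, sg_pow_e]
        refine ⟨k ^ ((d - 1) * b) * ((e - 1) * a), (d - 1) * b, ?_⟩
        rw [mul_inv_rev, ← inv_pow, ← inv_pow, htinv, hsinv, ← pow_mul, ← pow_mul,
          tau_pow_mul_sigma_pow] }
  obtain ⟨a, b, h⟩ := PresentedGroup.generated_by (braceRels d e k) T
    (by
      intro j
      fin_cases j
      · exact ⟨1, 0, by simp [sg]⟩
      · exact ⟨0, 1, by simp [tg]⟩) x
  exact ⟨a, b, h⟩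

lemma gg_surj_fin :
    Function.Surjective (fun p : ZMod e × ZMod d => sg d e k ^ p.1.val * tg d e k ^ p.2.val) := by
  intro x
  obtain ⟨a, b, rfl⟩ := gg_decomp d e k x
  refine ⟨((a : ZMod e), (b : ZMod d)), ?_⟩
  show sg d e k ^ ((a : ZMod e)).val * tg d e k ^ ((b : ZMod d)).val = _
  rw [← sg_pow_nat, ← tg_pow_nat]

lemma gg_finite : Finite (GGrp d e k) := Finite.of_surjective _ (gg_surj_fin d e k)

lemma card_H : Nat.card (HGrp d e k hke hud) = e * d := by
  have : HGrp d e k hke hud ≃ ZMod e × ZMod d :=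
    { toFun := fun x => (x.left.toAdd, x.right.toAdd)
      invFun := fun p => ⟨ofAdd p.1, ofAdd p.2⟩
      left_inv := fun x => by cases x; rfl
      right_inv := fun p => rfl }
  rw [Nat.card_congr this, Nat.card_prod, Nat.card_zmod, Nat.card_zmod]

lemma ggToH_bijective : Function.Bijective (ggToH d e k hke hud) := by
  have : Finite (GGrp d e k) := gg_finite d e k
  rw [Nat.bijective_iff_surjective_and_card]
  refine ⟨ggToH_surjective d e k hke hud, le_antisymm ?_ ?_⟩
  · calc Nat.card (GGrp d e k) ≤ Nat.card (ZMod e × ZMod d) :=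
          Nat.card_le_card_of_surjective _ (gg_surj_fin d e k)
      _ = Nat.card (HGrp d e k hke hud) := by
          rw [card_H, Nat.card_prod, Nat.card_zmod, Nat.card_zmod]
  · exact Nat.card_le_card_of_surjective _ (ggToH_surjective d e k hke hud)

/-- The isomorphism between the presented group and the model. -/
noncomputable def ggIso : GGrp d e k ≃* HGrp d e k hke hud :=
  MulEquiv.ofBijective _ (ggToH_bijective d e k hke hud)

end Model

end GGrpAux

namespace GGrpAux

open Multiplicative SemidirectProduct

section Invariants

set_option linter.unusedSectionVars false

variable (d e k : ℕ) [NeZero d] [NeZero e]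
  (hke : Nat.Coprime k e) (hud : (ZMod.unitOfCoprime k hke) ^ d = 1)

lemma hFinite : Finite (HGrp d e k hke hud) :=
  Nat.finite_of_card_ne_zero (by
    rw [card_H]
    exact Nat.mul_ne_zero (NeZero.ne e) (NeZero.ne d))

/-- Conjugation of an `inl` element in the model. -/
lemma conj_inl (x : HGrp d e k hke hud) (a : Multiplicative (ZMod e)) :
    x * inl a * x⁻¹ = inl (phi d e k hke hud x.right a) := by
  have hinv : ((inr x.right : HGrp d e k hke hud))⁻¹ = inr (x.right⁻¹) := (map_inv _ _).symm
  calc x * inl a * x⁻¹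
      = inl x.left * (inr x.right * inl a * (inr x.right)⁻¹) * (inl x.left)⁻¹ := by
        conv_lhs => rw [← inl_left_mul_inr_right x]
        group
    _ = inl x.left * inl (phi d e k hke hud x.right a) * (inl x.left)⁻¹ := by
        rw [hinv, ← inl_aut]
    _ = inl (x.left * phi d e k hke hud x.right a * x.left⁻¹) := by
        rw [map_mul, map_mul, map_inv]
    _ = inl (phi d e k hke hud x.right a) := by
        rw [mul_comm x.left, mul_assoc, mul_inv_cancel, mul_one]

lemma ofAdd_zpow (c : ZMod e) (j : ℤ) :
    (ofAdd c : Multiplicative (ZMod e)) ^ j = ofAdd ((j : ZMod e) * c) := by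
  show ofAdd (j • c) = _
  rw [zsmul_eq_mul]

lemma exists_normal_of_dvd (p : ℕ) (hpe : p ∣ e) :
    ∃ K : Subgroup (HGrp d e k hke hud), K.Normal ∧ Nat.card K = p := by
  set c0 : ZMod e := ((e / p : ℕ) : ZMod e) with hc0
  refine ⟨Subgroup.zpowers (inl (ofAdd c0)), ⟨?_⟩, ?_⟩
  · intro x hx g
    obtain ⟨i, rfl⟩ := Subgroup.mem_zpowers_iff.mp hx
    rw [← map_zpow, conj_inl, ofAdd_zpow]
    have happ : phi d e k hke hud g.right (ofAdd ((i : ZMod e) * c0))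
        = ofAdd ((((ZMod.unitOfCoprime k hke ^ (g.right.toAdd).val : (ZMod e)ˣ)) : ZMod e)
            * ((i : ZMod e) * c0)) := rfl
    rw [happ]
    refine Subgroup.mem_zpowers_iff.mpr
      ⟨(((((ZMod.unitOfCoprime k hke ^ (g.right.toAdd).val : (ZMod e)ˣ)) : ZMod e)
          * (i : ZMod e)).val : ℤ), ?_⟩
    rw [← map_zpow, ofAdd_zpow]
    congr 2
    push_cast
    rw [ZMod.natCast_rightInverse, mul_assoc]
  · rw [Nat.card_zpowers, orderOf_injective inl inl_injective, orderOf_ofAdd_eq_addOrderOf,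
      hc0, ZMod.addOrderOf_coe _ (NeZero.ne e),
      Nat.gcd_eq_right (Nat.div_dvd_of_dvd hpe), Nat.div_div_self hpe (NeZero.ne e)]

lemma dvd_of_normal (hord : orderOf (ZMod.unitOfCoprime k hke) = d) (p : ℕ) (hp : p.Prime)
    (K : Subgroup (HGrp d e k hke hud)) (hn : K.Normal) (hK : Nat.card K = p) : p ∣ e := by
  have hfin : Finite (HGrp d e k hke hud) := hFinite d e k hke hud
  have hKbot : K ≠ ⊥ := by
    intro h
    rw [h, Subgroup.card_bot] at hK
    exact hp.one_lt.ne hK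
  obtain ⟨y, hy1⟩ := Subgroup.ne_bot_iff_exists_ne_one.mp hKbot
  set x : HGrp d e k hke hud := (y : HGrp d e k hke hud) with hxdef
  have hxK : x ∈ K := y.2
  have hx1 : x ≠ 1 := by
    intro h
    exact hy1 (Subtype.ext h)
  have hordx : orderOf x = p := by
    have h1 : orderOf x ∣ p := by
      rw [← hK, hxdef, Subgroup.orderOf_coe]
      exact orderOf_dvd_natCard y
    rcases (Nat.dvd_prime hp).mp h1 with h | h
    · exact absurd (orderOf_eq_one_iff.mp h) hx1
    · exact h
  by_cases hb : rightHom x = 1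
  · have hxker : x ∈ inl.range := by
      rw [range_inl_eq_ker_rightHom]
      exact hb
    obtain ⟨a, ha⟩ := hxker
    have hpa : orderOf a = p := by
      rw [← hordx, ← ha, orderOf_injective inl inl_injective]
    have h2 : orderOf a ∣ e := by
      have h3 := orderOf_dvd_natCard a
      rwa [Nat.card_congr (Multiplicative.toAdd (α := ZMod e)), Nat.card_zmod] at h3
    exact hpa ▸ h2
  · exfalso
    have hKz : Subgroup.zpowers x = K :=
      Subgroup.eq_of_le_of_card_ge (Subgroup.zpowers_le.mpr hxK)
        (by rw [hK, Nat.card_zpowers, hordx])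
    set t : HGrp d e k hke hud := inl (ofAdd (1 : ZMod e)) with htdef
    have hcK : t * x * t⁻¹ ∈ K := hn.conj_mem x hxK t
    obtain ⟨i, hi⟩ := Subgroup.mem_zpowers_iff.mp (hKz ▸ hcK)
    set b := rightHom x with hbdef
    have hri : b ^ i = b := by
      have h4 := congrArg rightHom hi
      rwa [map_zpow, map_mul, map_mul, map_inv, htdef, rightHom_inl, one_mul, inv_one,
        mul_one] at h4
    have hordb : orderOf b = p := by
      have h5 : orderOf b ∣ p := hordx ▸ orderOf_map_dvd rightHom x
      rcases (Nat.dvd_prime hp).mp h5 with h | h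
      · exact absurd (orderOf_eq_one_iff.mp h) hb
      · exact h
    have hx_i : x ^ i = x := by
      have h1 : b ^ (i - 1) = 1 := by
        rw [zpow_sub, zpow_one, hri, mul_inv_cancel]
      have h2 : ((p : ℤ)) ∣ i - 1 := by
        rw [← hordb]
        exact orderOf_dvd_iff_zpow_eq_one.mpr h1
      have h3 : x ^ (i - 1) = 1 := orderOf_dvd_iff_zpow_eq_one.mp (by rw [hordx]; exact h2)
      calc x ^ i = x ^ (i - 1) * x := by rw [← zpow_add_one, Int.sub_add_cancel]
        _ = x := by rw [h3, one_mul]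
    have h6 : t * x * t⁻¹ = x := by rw [← hi, hx_i]
    have hcomm : t * x = x * t := mul_inv_eq_iff_eq_mul.mp h6
    have hleft := congrArg SemidirectProduct.left hcomm
    simp only [mul_left, htdef, left_inl, right_inl, map_one, MulAut.one_apply] at hleft
    have h7 : phi d e k hke hud x.right (ofAdd (1 : ZMod e)) = ofAdd (1 : ZMod e) := by
      rw [mul_comm] at hleft
      exact mul_left_cancel hleft.symm
    rw [← ofAdd_toAdd x.right, phi_apply] at h7
    have h8 : ((ZMod.unitOfCoprime k hke ^ ((x.right.toAdd).val) : (ZMod e)ˣ) : ZMod e) = 1 := by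
      have h9 := congrArg Multiplicative.toAdd h7
      simpa using h9
    have h10 : (ZMod.unitOfCoprime k hke) ^ ((x.right.toAdd).val) = 1 := Units.ext (by simpa using h8)
    have h11 : d ∣ (x.right.toAdd).val := by
      have h14 := orderOf_dvd_of_pow_eq_one h10
      rwa [hord] at h14
    have h12 : (x.right.toAdd).val = 0 := Nat.eq_zero_of_dvd_of_lt h11 (ZMod.val_lt _)
    have h13 : x.right = 1 := by
      have := (ZMod.val_eq_zero _).mp h12
      rw [← ofAdd_toAdd x.right, this]
      rfl
    exact hb (show rightHom x = 1 from h13)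

end Invariants

end GGrpAux

namespace GGrpAux

open Multiplicative SemidirectProduct

section Final

set_option linter.unusedSectionVars false

variable (d e k k' : ℕ) [NeZero d] [NeZero e]
  (hke : Nat.Coprime k e) (hke' : Nat.Coprime k' e)
  (hud : (ZMod.unitOfCoprime k hke) ^ d = 1)
  (hud' : (ZMod.unitOfCoprime k' hke') ^ d = 1)

lemma k_mem_powers (hcop : Nat.Coprime d e)
    (F : HGrp d e k hke hud ≃* HGrp d e k' hke' hud') :
    (k : ZMod e) ∈ Submonoid.powers ((k' : ZMod e)) := by
  set s := F (sH d e k hke hud) with hs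
  have hsord : orderOf s = e := by
    rw [hs, MulEquiv.orderOf_eq, sH, orderOf_injective inl inl_injective,
      orderOf_ofAdd_eq_addOrderOf, ZMod.addOrderOf_one]
  have hse : s ^ e = 1 := by rw [hs, ← map_pow, sH_pow_e, map_one]
  have hrb : rightHom s = 1 := by
    have h1 : (rightHom s) ^ e = 1 := by rw [← map_pow, hse, map_one]
    have h2 : orderOf (rightHom s) ∣ e := orderOf_dvd_of_pow_eq_one h1
    have h3 : orderOf (rightHom s) ∣ d := by
      have h4 := orderOf_dvd_natCard (rightHom s)
      rwa [Nat.card_congr (Multiplicative.toAdd (α := ZMod d)), Nat.card_zmod] at h4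
    exact orderOf_eq_one_iff.mp (Nat.dvd_one.mp (hcop ▸ Nat.dvd_gcd h3 h2))
  obtain ⟨a, ha⟩ : ∃ a, inl a = s := by
    have hmem : s ∈ (inl : Multiplicative (ZMod e) →* _).range := by
      rw [range_inl_eq_ker_rightHom]
      exact hrb
    exact hmem
  have haord : orderOf a = e := by
    rw [← orderOf_injective (inl : _ →* HGrp d e k' hke' hud') inl_injective a, ha, hsord]
  have haunit : IsUnit (a.toAdd) := by
    have h1 : addOrderOf (a.toAdd) = e := by
      rw [← orderOf_ofAdd_eq_addOrderOf, ofAdd_toAdd, haord]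
    have h2 : ((a.toAdd.val : ℕ) : ZMod e) = a.toAdd := ZMod.natCast_rightInverse _
    have h3 : addOrderOf (((a.toAdd.val : ℕ) : ZMod e)) = e / (e.gcd a.toAdd.val) :=
      ZMod.addOrderOf_coe _ (NeZero.ne e)
    rw [h2, h1] at h3
    have h4 : e.gcd a.toAdd.val = 1 := by
      rcases Nat.div_eq_self.mp h3.symm with h | h
      · exact absurd h (NeZero.ne e)
      · exact h
    rw [← h2]
    exact (ZMod.isUnit_iff_coprime _ e).mpr (Nat.Coprime.symm h4)
  set t := F (tH d e k hke hud) with ht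
  have hrel : t * s * t⁻¹ = s ^ k := by
    rw [ht, hs, ← map_mul, ← map_inv, ← map_mul, ← map_pow, conj_rel_H]
  rw [← ha, ← map_pow, conj_inl] at hrel
  have h6 : phi d e k' hke' hud' t.right a = a ^ k := inl_injective hrel
  have h7 : ((ZMod.unitOfCoprime k' hke' ^ (t.right.toAdd).val : (ZMod e)ˣ) : ZMod e) * a.toAdd
      = (k : ZMod e) * a.toAdd := by
    have h8 : phi d e k' hke' hud' t.right a
        = ofAdd (((ZMod.unitOfCoprime k' hke' ^ (t.right.toAdd).val : (ZMod e)ˣ) : ZMod e)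
            * a.toAdd) := rfl
    have h9 : a ^ k = ofAdd ((k : ZMod e) * a.toAdd) := by
      show ofAdd (k • a.toAdd) = _
      rw [nsmul_eq_mul]
    rw [h8, h9] at h6
    exact congrArg Multiplicative.toAdd h6
  have h10 : ((ZMod.unitOfCoprime k' hke' ^ (t.right.toAdd).val : (ZMod e)ˣ) : ZMod e)
      = (k : ZMod e) := haunit.mul_right_cancel h7
  refine ⟨(t.right.toAdd).val, ?_⟩
  calc ((k' : ZMod e)) ^ (t.right.toAdd).val
      = ((ZMod.unitOfCoprime k' hke' ^ (t.right.toAdd).val : (ZMod e)ˣ) : ZMod e) := by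
        rw [Units.val_pow_eq_pow_val, ZMod.coe_unitOfCoprime]
    _ = (k : ZMod e) := h10

end Final

section Transfer

lemma dvd_e'_of_iso {d e k d' e' k' : ℕ} [NeZero d] [NeZero e] [NeZero d'] [NeZero e']
    {hke : Nat.Coprime k e} {hke' : Nat.Coprime k' e'}
    {hud : (ZMod.unitOfCoprime k hke) ^ d = 1}
    {hud' : (ZMod.unitOfCoprime k' hke') ^ d' = 1}
    (hord' : orderOf (ZMod.unitOfCoprime k' hke') = d')
    (F : HGrp d e k hke hud ≃* HGrp d' e' k' hke' hud')
    (p : ℕ) (hp : p.Prime) (hpe : p ∣ e) : p ∣ e' := by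
  obtain ⟨K, hn, hc⟩ := exists_normal_of_dvd d e k hke hud p hpe
  refine dvd_of_normal d' e' k' hke' hud' hord' p hp (K.map F.toMonoidHom)
    (hn.map F.toMonoidHom F.surjective) ?_
  rw [← hc]
  exact (Nat.card_congr (K.equivMapOfInjective F.toMonoidHom F.injective).toEquiv).symm

lemma eq_of_same_primes {e e' : ℕ} (he : Squarefree e) (he' : Squarefree e')
    (h : ∀ p : ℕ, p.Prime → (p ∣ e ↔ p ∣ e')) : e = e' := by
  rw [← Nat.prod_primeFactors_of_squarefree he, ← Nat.prod_primeFactors_of_squarefree he']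
  congr 1
  ext p
  simp only [Nat.mem_primeFactors]
  constructor
  · rintro ⟨hp, hpe, -⟩
    exact ⟨hp, (h p hp).mp hpe, he'.ne_zero⟩
  · rintro ⟨hp, hpe, -⟩
    exact ⟨hp, (h p hp).mpr hpe, he.ne_zero⟩

end Transfer

end GGrpAux

open GGrpAux

/-- `G(d,e,k) ≅ G(d',e',k')` iff `d = d'`, `e = e'` and `k`, `k'` generate the same
cyclic subgroup of `(ℤ/eℤ)ˣ` (expressed via the cyclic submonoids they generate in `ℤ/eℤ`). -/
theorem GGrp_iso_iff (n d e k d' e' k' : ℕ) (hsf : Squarefree n)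
    (hde : n = d * e) (hde' : n = d' * e')
    (hcop : Nat.Coprime d e) (hcop' : Nat.Coprime d' e')
    (hke : Nat.Coprime k e) (hke' : Nat.Coprime k' e')
    (hord : orderOf (ZMod.unitOfCoprime k hke) = d)
    (hord' : orderOf (ZMod.unitOfCoprime k' hke') = d') :
    Nonempty (GGrp d e k ≃* GGrp d' e' k') ↔
      d = d' ∧ e = e' ∧
        Submonoid.powers ((k : ZMod e)) = Submonoid.powers ((k' : ZMod e)) := by
  have hn0 : n ≠ 0 := hsf.ne_zero
  have hd0 : d ≠ 0 := by rintro rfl; rw [zero_mul] at hde; exact hn0 hde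
  have he0 : e ≠ 0 := by rintro rfl; rw [mul_zero] at hde; exact hn0 hde
  have hd0' : d' ≠ 0 := by rintro rfl; rw [zero_mul] at hde'; exact hn0 hde'
  have he0' : e' ≠ 0 := by rintro rfl; rw [mul_zero] at hde'; exact hn0 hde'
  haveI : NeZero d := ⟨hd0⟩
  haveI : NeZero e := ⟨he0⟩
  haveI : NeZero d' := ⟨hd0'⟩
  haveI : NeZero e' := ⟨he0'⟩
  have hud : (ZMod.unitOfCoprime k hke) ^ d = 1 := by
    rw [← hord]; exact pow_orderOf_eq_one _
  have hud' : (ZMod.unitOfCoprime k' hke') ^ d' = 1 := by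
    rw [← hord']; exact pow_orderOf_eq_one _
  constructor
  · rintro ⟨F0⟩
    have F : HGrp d e k hke hud ≃* HGrp d' e' k' hke' hud' :=
      ((ggIso d e k hke hud).symm.trans F0).trans (ggIso d' e' k' hke' hud')
    have hee' : e = e' := by
      apply eq_of_same_primes
        (hsf.squarefree_of_dvd ⟨d, by rw [hde, mul_comm]⟩)
        (hsf.squarefree_of_dvd ⟨d', by rw [hde', mul_comm]⟩)
      intro p hp
      exact ⟨fun hpe => dvd_e'_of_iso hord' F p hp hpe,
        fun hpe' => dvd_e'_of_iso hord F.symm p hp hpe'⟩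
    subst hee'
    have hdd' : d = d' := by
      refine Nat.eq_of_mul_eq_mul_right (Nat.pos_of_ne_zero he0) ?_
      rw [← hde, hde']
    subst hdd'
    refine ⟨rfl, rfl, ?_⟩
    have h1 : (k : ZMod e) ∈ Submonoid.powers ((k' : ZMod e)) :=
      k_mem_powers d e k k' hke hke' hud hud' hcop F
    have h2 : (k' : ZMod e) ∈ Submonoid.powers ((k : ZMod e)) :=
      k_mem_powers d e k' k hke' hke hud' hud hcop F.symm
    exact le_antisymm (Submonoid.powers_le.mpr h1) (Submonoid.powers_le.mpr h2)
  · rintro ⟨rfl, rfl, hpow⟩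
    exact backward hke hke' hord hord' hpow
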